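/- Let γ > 0 and 0 < α ≤ 2, and let φ₂(x) = √(2γ) · x · (γ/π)^{1/4} e^{−γx²/2} with Fourier transform φ̂₂(k) = ∫_ℝ φ₂(x)e^{−ikx}dx. Then (1/(2π)) ∫_ℝ |k|^α |φ̂₂(k)|² dk + ∫_ℝ γ²x² φ₂(x)² dx = 3γ/2 + (2γ^{α/2}/√π) Γ((3+α)/2). -/

import Mathlib

open Real MeasureTheory
open Complex Filter

/-- The L²-normalized first excited state of the 1D harmonic oscillator `-d²/dx² + γ²x²`. -/
noncomputable def phi2 (γ : ℝ) (x : ℝ) : ℝ :=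
  Real.sqrt (2 * γ) * x * (γ / Real.pi) ^ ((1 : ℝ) / 4) * Real.exp (-γ * x ^ 2 / 2)

lemma integrable_cexp_q (b : ℝ) (hb : 0 < b) (k : ℝ) :
    Integrable fun x : ℝ => Complex.exp (-(b:ℂ) * x ^ 2 - Complex.I * k * x) := by
  have := integrable_cexp_quadratic (b := (b:ℂ)) (by simpa using hb) (-(Complex.I * k)) 0
  refine this.congr ?_
  filter_upwards with x
  ring_nf

lemma integrable_mul_cexp_q (b : ℝ) (hb : 0 < b) (k : ℝ) :
    Integrable fun x : ℝ => (x:ℂ) * Complex.exp (-(b:ℂ) * x ^ 2 - Complex.I * k * x) := by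
  have hbound : Integrable fun x : ℝ => |x * Real.exp (-b * x ^ 2)| :=
    (integrable_mul_exp_neg_mul_sq hb).abs
  refine hbound.mono' ?_ ?_
  · apply Continuous.aestronglyMeasurable
    continuity
  · filter_upwards with x
    rw [norm_mul, Complex.norm_exp]
    have : (-(b:ℂ) * x ^ 2 - Complex.I * k * x).re = -b * x ^ 2 := by
      simp [Complex.sub_re, Complex.mul_re, ← Complex.ofReal_pow]
    rw [this, norm_real, Real.norm_eq_abs, abs_mul, abs_of_pos (Real.exp_pos _)]

lemma xgauss_ft (b : ℝ) (hb : 0 < b) (k : ℝ) :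
    ∫ x : ℝ, (x:ℂ) * Complex.exp (-(b:ℂ) * x ^ 2 - Complex.I * k * x)
      = -(Complex.I * k / (2 * b)) * ((π / b : ℂ) ^ (1/2 : ℂ))
        * Complex.exp (-(k:ℂ) ^ 2 / (4 * b)) := by
  have hb' : (0:ℝ) < (b:ℂ).re := by simpa using hb
  have hbne : (b:ℂ) ≠ 0 := by exact_mod_cast hb.ne'
  -- the Gaussian integral
  have hgauss : ∫ x : ℝ, Complex.exp (-(b:ℂ) * x ^ 2 - Complex.I * k * x)
      = ((π / b : ℂ) ^ (1/2 : ℂ)) * Complex.exp (-(k:ℂ) ^ 2 / (4 * b)) := by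
    have := fourierIntegral_gaussian hb' (-(k:ℂ))
    rw [show ∫ x : ℝ, Complex.exp (Complex.I * (-(k:ℂ)) * x) * Complex.exp (-(b:ℂ) * x ^ 2)
        = ∫ x : ℝ, Complex.exp (-(b:ℂ) * x ^ 2 - Complex.I * k * x) from ?_] at this
    · rw [this]; ring_nf
    · congr 1; ext x; rw [← Complex.exp_add]; ring_nf
  -- derivative identity
  have A : ∀ z : ℂ, HasDerivAt (fun z : ℂ => -(2 * (b:ℂ))⁻¹ * Complex.exp (-(b:ℂ) * z ^ 2 - Complex.I * k * z))
      ((z + Complex.I * k / (2 * b)) * Complex.exp (-(b:ℂ) * z ^ 2 - Complex.I * k * z)) z := by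
    intro z
    have h1 : HasDerivAt (fun z : ℂ => -(b:ℂ) * z ^ 2 - Complex.I * k * z)
        (-(b:ℂ) * (2 * z) - Complex.I * k) z := by
      have := ((hasDerivAt_pow 2 z).const_mul (-(b:ℂ))).sub ((hasDerivAt_id z).const_mul (Complex.I * k))
      simpa [Pi.sub_def] using this
    have := (h1.cexp).const_mul (-(2 * (b:ℂ))⁻¹)
    refine this.congr_deriv ?_
    field_simp
    ring
  have hderiv : ∀ x : ℝ, HasDerivAt (fun x : ℝ => -(2 * (b:ℂ))⁻¹ * Complex.exp (-(b:ℂ) * x ^ 2 - Complex.I * k * x))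
      (((x:ℂ) + Complex.I * k / (2 * b)) * Complex.exp (-(b:ℂ) * x ^ 2 - Complex.I * k * x)) x :=
    fun x => (A x).comp_ofReal
  have hint' : Integrable fun x : ℝ => ((x:ℂ) + Complex.I * k / (2 * b)) * Complex.exp (-(b:ℂ) * x ^ 2 - Complex.I * k * x) := by
    have := (integrable_mul_cexp_q b hb k).add ((integrable_cexp_q b hb k).const_mul (Complex.I * k / (2 * b)))
    refine this.congr ?_
    filter_upwards with x
    simp only [Pi.add_apply]
    ring
  have hf : Integrable fun x : ℝ => -(2 * (b:ℂ))⁻¹ * Complex.exp (-(b:ℂ) * x ^ 2 - Complex.I * k * x) :=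
    (integrable_cexp_q b hb k).const_mul _
  have hzero := integral_eq_zero_of_hasDerivAt_of_integrable hderiv hint' hf
  simp only [add_mul] at hzero
  rw [integral_add (integrable_mul_cexp_q b hb k) ((integrable_cexp_q b hb k).const_mul _),
    integral_const_mul, hgauss] at hzero
  have : ∫ x : ℝ, (x:ℂ) * Complex.exp (-(b:ℂ) * x ^ 2 - Complex.I * k * x)
      = -(Complex.I * k / (2 * b) * (((π / b : ℂ) ^ (1/2 : ℂ)) * Complex.exp (-(k:ℂ) ^ 2 / (4 * b)))) := by
    linear_combination hzero
  rw [this]; ring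

lemma gauss_moment (c s : ℝ) (hc : 0 < c) (hs : -1 < s) :
    ∫ x in Set.Ioi (0:ℝ), x ^ s * Real.exp (-(c * x ^ 2))
      = (1/2) * ((1/c) ^ ((s+1)/2) * Real.Gamma ((s+1)/2)) := by
  have h := integral_comp_rpow_Ioi_of_pos
    (g := fun y : ℝ => (1/2 : ℝ) * (y ^ ((s-1)/2) * Real.exp (-(c*y)))) (p := 2) two_pos
  have h1 : ∫ x in Set.Ioi (0:ℝ), x ^ s * Real.exp (-(c * x ^ 2))
      = ∫ x in Set.Ioi (0:ℝ), (2 * x ^ ((2:ℝ)-1)) •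
          ((1/2 : ℝ) * ((x ^ (2:ℝ)) ^ ((s-1)/2) * Real.exp (-(c * x ^ (2:ℝ))))) := by
    refine setIntegral_congr_fun measurableSet_Ioi (fun x hx => ?_)
    have hx : (0:ℝ) < x := hx
    have e1 : x ^ (2:ℝ) = x ^ 2 := by
      rw [← Real.rpow_natCast x 2]; norm_num
    have e2 : (x ^ (2:ℝ)) ^ ((s-1)/2) = x ^ (s-1) := by
      rw [← Real.rpow_mul hx.le]; congr 1; ring
    have e3 : x * x ^ (s-1) = x ^ s := by
      nth_rewrite 1 [← Real.rpow_one x]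
      rw [← Real.rpow_add hx]; congr 1; ring
    rw [smul_eq_mul, show (2:ℝ) - 1 = 1 by norm_num, Real.rpow_one, e2, e1, ← e3]
    ring
  rw [h1, h, integral_const_mul]
  congr 1
  have := Real.integral_rpow_mul_exp_neg_mul_Ioi (a := (s+1)/2) (r := c) (by linarith) hc
  rw [show (s+1)/2 - 1 = (s-1)/2 by ring] at this
  rw [this]

lemma gauss_moment_line (c s : ℝ) (hc : 0 < c) (hs : -1 < s) :
    ∫ x : ℝ, |x| ^ s * Real.exp (-(c * x ^ 2))
      = (1/c) ^ ((s+1)/2) * Real.Gamma ((s+1)/2) := by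
  have h : ∫ x : ℝ, |x| ^ s * Real.exp (-(c * x ^ 2))
      = ∫ x : ℝ, (fun t : ℝ => t ^ s * Real.exp (-(c * t ^ 2))) |x| := by
    congr 1; ext x; simp [_root_.sq_abs]
  rw [h, integral_comp_abs (f := fun t : ℝ => t ^ s * Real.exp (-(c * t ^ 2))), gauss_moment c s hc hs]
  ring

lemma phi2_ft (γ : ℝ) (hγ : 0 < γ) (k : ℝ) :
    (∫ x : ℝ, (phi2 γ x : ℂ) * Complex.exp (-Complex.I * k * x))
      = (Real.sqrt (2*γ) * (γ/π) ^ ((1:ℝ)/4) : ℝ)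
        * (-(Complex.I * k / (2 * (γ/2))) * ((π / (γ/2) : ℂ) ^ (1/2 : ℂ))
          * Complex.exp (-(k:ℂ) ^ 2 / (4 * (γ/2)))) := by
  have hpt : ∀ x : ℝ, (phi2 γ x : ℂ) * Complex.exp (-Complex.I * k * x)
      = ((Real.sqrt (2*γ) * (γ/π) ^ ((1:ℝ)/4) : ℝ) : ℂ)
        * ((x:ℂ) * Complex.exp (-((γ/2 : ℝ):ℂ) * x ^ 2 - Complex.I * k * x)) := by
    intro x
    unfold phi2
    rw [sub_eq_add_neg, Complex.exp_add]
    push_cast [Complex.ofReal_exp]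
    ring_nf
  simp_rw [hpt]
  rw [integral_const_mul, xgauss_ft (γ/2) (by linarith) k]
  push_cast
  ring

lemma phi2_ft_abs_sq (γ : ℝ) (hγ : 0 < γ) (k : ℝ) :
    (‖∫ x : ℝ, (phi2 γ x : ℂ) * Complex.exp (-Complex.I * k * x)‖) ^ 2
      = (2 * γ * (γ/π) ^ ((1:ℝ)/2) * (2*π/γ^3)) * (k ^ 2 * Real.exp (-(γ⁻¹ * k ^ 2))) := by
  have hγ' : (γ:ℝ) ≠ 0 := hγ.ne'
  rw [phi2_ft γ hγ k]
  have h2 : ((π / ((γ:ℂ)/2)) ^ (1/2 : ℂ)) = (((2*π/γ)^((1:ℝ)/2) : ℝ) : ℂ) := by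
    rw [Complex.ofReal_cpow (by positivity)]
    push_cast
    rw [show ((π:ℂ) / (γ/2)) = 2*π/γ by field_simp]
  have h3 : (-(k:ℂ)^2/(4*((γ:ℂ)/2))) = (((-(k^2)/(2*γ) : ℝ)) : ℂ) := by push_cast; ring
  have h4 : -(Complex.I * k / (2*((γ:ℂ)/2))) = ((k/γ : ℝ) : ℂ) * (-Complex.I) := by
    push_cast; field_simp
  rw [h2, h3, h4, ← Complex.ofReal_exp]
  rw [norm_mul, norm_mul, norm_mul, norm_mul]
  simp only [Complex.norm_real, Real.norm_eq_abs, norm_neg, Complex.norm_I, mul_one]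
  have e1 : |Real.sqrt (2*γ) * (γ/π) ^ ((1:ℝ)/4)| ^ 2 = 2 * γ * (γ/π) ^ ((1:ℝ)/2) := by
    rw [_root_.sq_abs, mul_pow, Real.sq_sqrt (by linarith), ← Real.rpow_natCast ((γ/π) ^ ((1:ℝ)/4)) 2,
      ← Real.rpow_mul (by positivity)]
    norm_num
  have e2 : |(2*π/γ)^((1:ℝ)/2)| ^ 2 = 2*π/γ := by
    rw [_root_.sq_abs, ← Real.rpow_natCast ((2*π/γ) ^ ((1:ℝ)/2)) 2, ← Real.rpow_mul (by positivity)]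
    norm_num
  have e3 : |Real.exp (-(k^2)/(2*γ))| ^ 2 = Real.exp (-(γ⁻¹ * k ^ 2)) := by
    rw [_root_.sq_abs, sq, ← Real.exp_add]
    congr 1
    field_simp
    ring
  have e4 : |k/γ| ^ 2 = k^2/γ^2 := by
    rw [abs_div, abs_of_pos hγ, div_pow, _root_.sq_abs]
  rw [mul_pow, mul_pow, mul_pow, e1, e2, e3, e4]
  field_simp

theorem energy_first_excited_state_harmonic (γ α : ℝ) (hγ : 0 < γ) (hα : 0 < α) (hα2 : α ≤ 2) :
    (1 / (2 * π)) * (∫ k : ℝ, |k| ^ α *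
        (‖∫ x : ℝ, (phi2 γ x : ℂ) * Complex.exp (-Complex.I * k * x)‖) ^ 2)
      + ∫ x : ℝ, γ ^ 2 * x ^ 2 * (phi2 γ x) ^ 2
      = 3 * γ / 2 + 2 * γ ^ (α / 2) / Real.sqrt π * Real.Gamma ((3 + α) / 2) := by
  have hπ : (0:ℝ) < π := Real.pi_pos
  have hγ' : γ ≠ 0 := hγ.ne'
  -- kinetic integrand
  have hK : ∀ k : ℝ, |k| ^ α * (‖∫ x : ℝ, (phi2 γ x : ℂ)
        * Complex.exp (-Complex.I * k * x)‖) ^ 2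
      = (2 * γ * (γ/π) ^ ((1:ℝ)/2) * (2*π/γ^3)) * (|k| ^ (α+2) * Real.exp (-(γ⁻¹ * k ^ 2))) := by
    intro k
    rw [phi2_ft_abs_sq γ hγ k]
    rcases eq_or_ne k 0 with rfl | hk
    · simp [Real.zero_rpow hα.ne', Real.zero_rpow (by positivity : α + 2 ≠ 0)]
    · have : |k| ^ (α+2) = |k| ^ α * k ^ 2 := by
        rw [Real.rpow_add (abs_pos.mpr hk)]
        congr 1
        rw [show ((2:ℝ)) = ((2:ℕ):ℝ) by norm_num, Real.rpow_natCast, _root_.sq_abs]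
      rw [this]; ring
  -- potential integrand
  have hP : ∀ x : ℝ, γ ^ 2 * x ^ 2 * (phi2 γ x) ^ 2
      = (γ^2 * (2 * γ * (γ/π) ^ ((1:ℝ)/2))) * (|x| ^ (4:ℝ) * Real.exp (-(γ * x ^ 2))) := by
    intro x
    unfold phi2
    have e0 : |x| ^ (4:ℝ) = x ^ 4 := by
      rw [show (4:ℝ) = ((4:ℕ):ℝ) by norm_num, Real.rpow_natCast, pow_abs,
        _root_.abs_of_nonneg (by positivity : (0:ℝ) ≤ x ^ 4)]
    have e1 : ((γ/π) ^ ((1:ℝ)/4)) ^ 2 = (γ/π) ^ ((1:ℝ)/2) := by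
      rw [← Real.rpow_natCast ((γ/π) ^ ((1:ℝ)/4)) 2, ← Real.rpow_mul (by positivity)]
      norm_num
    have e2 : (Real.exp (-γ * x ^ 2 / 2)) ^ 2 = Real.exp (-(γ * x ^ 2)) := by
      rw [sq, ← Real.exp_add]; congr 1; ring
    rw [e0, mul_pow, mul_pow, mul_pow, Real.sq_sqrt (by linarith : (0:ℝ) ≤ 2*γ), e1, e2]
    ring
  simp only [hK, hP]
  rw [integral_const_mul, integral_const_mul,
    gauss_moment_line γ⁻¹ (α+2) (by positivity) (by linarith),
    gauss_moment_line γ 4 hγ (by norm_num)]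
  have hG52 : Real.Gamma ((4+1)/2) = 3/4 * Real.sqrt π := by
    rw [show ((4:ℝ)+1)/2 = 3/2 + 1 by norm_num, Real.Gamma_add_one (by norm_num),
      show (3:ℝ)/2 = 1/2 + 1 by norm_num, Real.Gamma_add_one (by norm_num),
      Real.Gamma_one_half_eq]
    ring
  rw [hG52, show (α+2+1)/2 = (3+α)/2 by ring, one_div γ⁻¹, inv_inv]
  have hsplit : (γ/π) ^ ((1:ℝ)/2) = γ ^ ((1:ℝ)/2) / π ^ ((1:ℝ)/2) :=
    Real.div_rpow hγ.le hπ.le _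
  have hsqrtπ : Real.sqrt π = π ^ ((1:ℝ)/2) := Real.sqrt_eq_rpow π
  have hg12 : (0:ℝ) < γ ^ ((1:ℝ)/2) := Real.rpow_pos_of_pos hγ _
  have key1 : γ ^ ((3+α)/2) = γ ^ (α/2) * γ ^ 2 / γ ^ ((1:ℝ)/2) := by
    rw [eq_div_iff hg12.ne', mul_comm (γ ^ ((3+α)/2)), ← Real.rpow_add hγ,
      ← Real.rpow_natCast γ 2, ← Real.rpow_add hγ]
    congr 1; push_cast; ring
  have key2 : (1/γ) ^ (((4:ℝ)+1)/2) = (γ ^ ((1:ℝ)/2) * γ ^ 2)⁻¹ := by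
    rw [one_div, Real.inv_rpow hγ.le]
    congr 1
    rw [← Real.rpow_natCast γ 2, ← Real.rpow_add hγ]
    norm_num
  rw [key2, hsplit, hsqrtπ, key1]
  have hp12 : (0:ℝ) < π ^ ((1:ℝ)/2) := Real.rpow_pos_of_pos hπ _
  field_simp
  ring
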